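/- For two different nodes x_i and x_j in the Koch network K_g, with labels {i_0, i_1, …, i_{n_i}} and {j_0, j_1, …, j_{n_j}} respectively (where i_0 = j_0 = 0), the diagonal entries of the pseudoinverse L†(g) compare as follows: (1) if n_i > n_j then L†_{x_i x_i}(g) > L†_{x_j x_j}(g); (2) if n_i < n_j then L†_{x_i x_i}(g) < L†_{x_j x_j}(g); (3) if n_i = n_j and there exists an index z with 0 ≤ z ≤ n_i such that i_l = j_l for l = 0,1,…,z−1 but i_z ≠ j_z, then L†_{x_i x_i}(g) > L†_{x_j x_j}(g) if i_z > j_z, and L†_{x_i x_i}(g) < L†_{x_j x_j}(g) if i_z < j_z; (4) if n_i = n_j and i_l = j_l for all l = 0,1,…,n_i, then L†_{x_i x_i}(g) = L†_{x_j x_j}(g). -/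

import Mathlib

open Matrix BigOperators

/-- The triangles of the Koch network `K_g`: the initial triangle, plus, at each
iteration, one new triangle for each corner node of each existing triangle. -/
def KochT : ℕ → Type
  | 0 => Unit
  | g + 1 => KochT g ⊕ (KochT g × Fin 3)

/-- The vertices of the Koch network `K_g`: at each iteration, each corner node of
each existing triangle spawns two new vertices. -/
def KochV : ℕ → Type
  | 0 => Fin 3
  | g + 1 => KochV g ⊕ (KochT g × Fin 3 × Fin 2)

instance kochTFintype : ∀ g, Fintype (KochT g)
  | 0 => inferInstanceAs (Fintype Unit)
  | g + 1 =>
    letI := kochTFintype g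
    inferInstanceAs (Fintype (KochT g ⊕ (KochT g × Fin 3)))

instance kochVFintype : ∀ g, Fintype (KochV g)
  | 0 => inferInstanceAs (Fintype (Fin 3))
  | g + 1 =>
    letI := kochVFintype g
    letI := kochTFintype g
    inferInstanceAs (Fintype (KochV g ⊕ (KochT g × Fin 3 × Fin 2)))

instance kochTDecEq : ∀ g, DecidableEq (KochT g)
  | 0 => inferInstanceAs (DecidableEq Unit)
  | g + 1 =>
    letI := kochTDecEq g
    inferInstanceAs (DecidableEq (KochT g ⊕ (KochT g × Fin 3)))

instance kochVDecEq : ∀ g, DecidableEq (KochV g)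
  | 0 => inferInstanceAs (DecidableEq (Fin 3))
  | g + 1 =>
    letI := kochVDecEq g
    letI := kochTDecEq g
    inferInstanceAs (DecidableEq (KochV g ⊕ (KochT g × Fin 3 × Fin 2)))

/-- The three corners of a triangle of `K_g`.  For a triangle created at some
iteration and attached to corner `i` of triangle `t`, corner `0` is the mother node
(corner `i` of `t`) and corners `1`, `2` are the two newly created nodes. -/
def kochCorner : ∀ g, KochT g → Fin 3 → KochV g
  | 0, _, c => c
  | g + 1, Sum.inl t, c => Sum.inl (kochCorner g t c)
  | g + 1, Sum.inr (t, i), c =>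
    if c = 0 then Sum.inl (kochCorner g t i)
    else if c = 1 then Sum.inr (t, i, 0) else Sum.inr (t, i, 1)

/-- The Koch network `K_g` as a simple graph: two vertices are adjacent iff they
are distinct corners of a common triangle. -/
def kochGraph (g : ℕ) : SimpleGraph (KochV g) :=
  SimpleGraph.fromRel (fun x y => ∃ (t : KochT g) (c c' : Fin 3),
    c ≠ c' ∧ x = kochCorner g t c ∧ y = kochCorner g t c')

/-- The level of a node of `K_g`: the iteration at which it was created.  The three
initial nodes (the hubs) are at level `0`. -/
def kochLevel : ∀ g, KochV g → ℕ
  | 0, _ => 0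
  | g + 1, Sum.inl x => kochLevel g x
  | g + 1, Sum.inr _ => g + 1

/-- The parent (mother node) of a node of `K_g`; the hubs have no parent. -/
def kochParent : ∀ g, KochV g → Option (KochV g)
  | 0, _ => none
  | g + 1, Sum.inl x => (kochParent g x).map Sum.inl
  | g + 1, Sum.inr (t, i, _) => some (Sum.inl (kochCorner g t i))

/-- The label `{0, i_1, …, i_n}` of a node of `K_g`: the increasing list of levels of
the nodes on the unique shortest path from the nearest hub to the node.  A hub has
label `[0]`; a node created at iteration `g+1` appends `g+1` to its mother's label. -/
def kochLabel : ∀ g, KochV g → List ℕ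
  | 0, _ => [0]
  | g + 1, Sum.inl x => kochLabel g x
  | g + 1, Sum.inr (t, i, _) => kochLabel g (kochCorner g t i) ++ [g + 1]

/-- The all-ones matrix `J`. -/
def JMat (V : Type*) : Matrix V V ℝ := Matrix.of fun _ _ => (1 : ℝ)

/-- The Laplacian matrix (over `ℝ`) of a simple graph (all edge weights `1`). -/
noncomputable def glap {V : Type*} [Fintype V] (G : SimpleGraph V) : Matrix V V ℝ := by
  classical exact SimpleGraph.lapMatrix ℝ G

/-- The pseudoinverse `L† = (L + (1/N)·J)⁻¹ - (1/N)·J` of the graph Laplacian. -/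
noncomputable def gdag {V : Type*} [Fintype V] [DecidableEq V] (G : SimpleGraph V) : Matrix V V ℝ :=
  (glap G + ((Fintype.card V : ℝ))⁻¹ • JMat V)⁻¹ - ((Fintype.card V : ℝ))⁻¹ • JMat V

/-- The resistance distance `r_{xy} = L†_{xx} + L†_{yy} - 2 L†_{xy}`. -/
noncomputable def gres {V : Type*} [Fintype V] [DecidableEq V] (G : SimpleGraph V) (x y : V) : ℝ :=
  gdag G x x + gdag G y y - 2 * gdag G x y

/-! ### Auxiliary development -/

section Koch

open Finset

/-- Recursive "distance" matrix of the Koch network (values in `ℕ`). -/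
def dmat : ∀ g, KochV g → KochV g → ℕ
  | 0, x, y => if x = y then 0 else 1
  | g+1, Sum.inl x, Sum.inl y => dmat g x y
  | g+1, Sum.inl x, Sum.inr (t,i,_) => dmat g x (kochCorner g t i) + 1
  | g+1, Sum.inr (t,i,_), Sum.inl y => dmat g (kochCorner g t i) y + 1
  | g+1, Sum.inr (t,i,a), Sum.inr (t',i',a') =>
      if t = t' ∧ i = i' then (if a = a' then 0 else 1)
      else dmat g (kochCorner g t i) (kochCorner g t' i') + 2

/-- Total distance of a vertex. -/
def Dn (g : ℕ) (x : KochV g) : ℕ := ∑ y, dmat g x y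

/-- Sum of distances to all triangle corners (with multiplicity). -/
def Wn (g : ℕ) (x : KochV g) : ℕ := ∑ p : KochT g × Fin 3, dmat g x (kochCorner g p.1 p.2)

/-- Number of triangle-corner pairs at a given vertex. -/
def Tc (g : ℕ) (x : KochV g) : ℕ := ∑ p : KochT g × Fin 3, if kochCorner g p.1 p.2 = x then 1 else 0

lemma card_T : ∀ (g : ℕ), Fintype.card (KochT g) = 4^g
  | 0 => rfl
  | g+1 => by
    have h : Fintype.card (KochT (g+1)) = Fintype.card (KochT g) + Fintype.card (KochT g × Fin 3) :=
      Fintype.card_sum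
    rw [h, Fintype.card_prod, Fintype.card_fin, card_T g]; ring

lemma dummy_card_T : True := trivial

lemma card_V : ∀ (g : ℕ), Fintype.card (KochV g) = 2*4^g + 1
  | 0 => rfl
  | g+1 => by
    have h : Fintype.card (KochV (g+1))
        = Fintype.card (KochV g) + Fintype.card (KochT g × Fin 3 × Fin 2) :=
      Fintype.card_sum
    rw [h, Fintype.card_prod, Fintype.card_prod, Fintype.card_fin, Fintype.card_fin,
      card_V g, card_T g]; ring

lemma dummy_card_V : True := trivial

lemma dmat_self : ∀ (g : ℕ) (x : KochV g), dmat g x x = 0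
  | 0, x => by simp [dmat]
  | g+1, Sum.inl x => by simp [dmat, dmat_self g x]
  | g+1, Sum.inr (t,i,a) => by simp [dmat]

lemma dummy_dmat_self : True := trivial

lemma dmat_comm : ∀ (g : ℕ) (x y : KochV g), dmat g x y = dmat g y x
  | 0, x, y => by
    by_cases h : x = y
    · subst h; rfl
    · simp [dmat, h, Ne.symm h]
  | g+1, Sum.inl x, Sum.inl y => dmat_comm g x y
  | g+1, Sum.inl x, Sum.inr (t,i,a) => by
    simp [dmat, dmat_comm g x (kochCorner g t i)]
  | g+1, Sum.inr (t,i,a), Sum.inl y => by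
    simp [dmat, dmat_comm g (kochCorner g t i) y]
  | g+1, Sum.inr (t,i,a), Sum.inr (t',i',a') => by
    by_cases h : t = t' ∧ i = i'
    · obtain ⟨rfl, rfl⟩ := h
      by_cases ha : a = a'
      · subst ha; rfl
      · simp [dmat, ha, Ne.symm ha]
    · have h' : ¬ (t' = t ∧ i' = i) := fun hc => h ⟨hc.1.symm, hc.2.symm⟩
      simp [dmat, h, h', dmat_comm g (kochCorner g t i) (kochCorner g t' i')]

lemma dummy_dmat_comm : True := trivial

lemma sumV_split {M : Type*} [AddCommMonoid M] (g : ℕ) (f : KochV (g+1) → M) :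
    ∑ y, f y = (∑ y : KochV g, f (Sum.inl y))
      + ∑ q : KochT g × Fin 3, ∑ a : Fin 2, f (Sum.inr (q.1, q.2, a)) := by
  refine (Fintype.sum_sum_type f).trans ?_
  congr 1
  simp only [Fintype.sum_prod_type]

lemma sumT_split {M : Type*} [AddCommMonoid M] (g : ℕ) (f : KochT (g+1) × Fin 3 → M) :
    ∑ p, f p = (∑ p : KochT g × Fin 3, f (Sum.inl p.1, p.2))
      + ∑ q : KochT g × Fin 3, ∑ c : Fin 3, f (Sum.inr q, c) := by
  rw [Fintype.sum_prod_type]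
  refine (Fintype.sum_sum_type (fun t => ∑ c : Fin 3, f (t, c))).trans ?_
  congr 1 <;> simp only [Fintype.sum_prod_type]

lemma Wn_eq (g : ℕ) (x : KochV g) :
    Wn g x = ∑ q : KochT g × Fin 3, dmat g x (kochCorner g q.1 q.2) := rfl

lemma card_pairs (g : ℕ) : (Finset.univ : Finset (KochT g × Fin 3)).card = 3 * 4^g := by
  simp [Finset.card_univ, card_T g]; ring

lemma Wn_inl (g : ℕ) (x : KochV g) : Wn (g+1) (Sum.inl x) = 4 * Wn g x + 6*4^g := by
  rw [Wn_eq (g+1) (Sum.inl x), sumT_split g (fun p => dmat (g+1) (Sum.inl x) (kochCorner (g+1) p.1 p.2))]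
  have h1 : (∑ p : KochT g × Fin 3, dmat (g+1) (Sum.inl x) (kochCorner (g+1) (Sum.inl p.1) p.2))
      = Wn g x := by
    refine Finset.sum_congr rfl fun p _ => ?_
    simp [kochCorner, dmat]
  have h2 : ∀ q : KochT g × Fin 3, (∑ c : Fin 3,
      dmat (g+1) (Sum.inl x) (kochCorner (g+1) (Sum.inr q) c))
      = 3 * dmat g x (kochCorner g q.1 q.2) + 2 := by
    intro q
    rw [Fin.sum_univ_three]
    obtain ⟨t, i⟩ := q
    simp [kochCorner, dmat]
    ring
  rw [h1, Finset.sum_congr rfl fun q _ => h2 q, Finset.sum_add_distrib, ← Finset.mul_sum,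
    Finset.sum_const, card_pairs g, ← Wn_eq]
  ring

lemma dummy_Wn_inl : True := trivial

lemma sum_shift3 {A : Type*} [Fintype A] [DecidableEq A] (F E : A → ℕ) (a : A) (d : ℕ)
    (hAt : F a + d = E a) (hFE : ∀ q ≠ a, F q = E q) : (∑ q, F q) + d = ∑ q, E q := by
  have hsF := Finset.add_sum_erase Finset.univ F (Finset.mem_univ a)
  have hsE := Finset.add_sum_erase Finset.univ E (Finset.mem_univ a)
  have her : (∑ q ∈ Finset.univ.erase a, F q) = ∑ q ∈ Finset.univ.erase a, E q :=
    Finset.sum_congr rfl fun q hq => hFE q (Finset.ne_of_mem_erase hq)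
  omega

lemma kc0 (g : ℕ) (t : KochT g) (i : Fin 3) :
    kochCorner (g+1) (Sum.inr (t,i)) 0 = Sum.inl (kochCorner g t i) := rfl
lemma kc1 (g : ℕ) (t : KochT g) (i : Fin 3) :
    kochCorner (g+1) (Sum.inr (t,i)) 1 = Sum.inr (t,i,0) := rfl
lemma kc2 (g : ℕ) (t : KochT g) (i : Fin 3) :
    kochCorner (g+1) (Sum.inr (t,i)) 2 = Sum.inr (t,i,1) := rfl

lemma Wn_inr (g : ℕ) (t : KochT g) (i : Fin 3) (a : Fin 2) :
    Wn (g+1) (Sum.inr (t,i,a)) + 3 = 4 * Wn g (kochCorner g t i) + 18*4^g := by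
  set c0 := kochCorner g t i with hc0
  rw [Wn_eq (g+1) (Sum.inr (t,i,a)), sumT_split g (fun p => dmat (g+1) (Sum.inr (t,i,a)) (kochCorner (g+1) p.1 p.2))]
  dsimp only
  have h1 : (∑ p : KochT g × Fin 3, dmat (g+1) (Sum.inr (t,i,a)) (kochCorner (g+1) (Sum.inl p.1) p.2))
      = Wn g c0 + 3*4^g := by
    have he : ∀ p : KochT g × Fin 3,
        dmat (g+1) (Sum.inr (t,i,a)) (kochCorner (g+1) (Sum.inl p.1) p.2)
          = dmat g c0 (kochCorner g p.1 p.2) + 1 := by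
      intro p; simp [kochCorner, dmat, hc0]
    rw [Finset.sum_congr rfl fun p _ => he p, Finset.sum_add_distrib, Finset.sum_const,
      card_pairs g, ← Wn_eq]
    simp [mul_comm]
  have hFE : ∀ q, q ≠ (t,i) → (∑ c : Fin 3,
      dmat (g+1) (Sum.inr (t,i,a)) (kochCorner (g+1) (Sum.inr q) c))
      = 3 * dmat g c0 (kochCorner g q.1 q.2) + 5 := by
    intro q hq
    obtain ⟨s, j⟩ := q
    have hns : ¬ (t = s ∧ i = j) := by
      rintro ⟨rfl, rfl⟩; exact hq rfl
    rw [Fin.sum_univ_three]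
    rw [kc0 g s j, kc1 g s j, kc2 g s j]
    simp only [kochCorner, dmat]
    rw [← hc0]
    norm_num [hns, dmat_comm g c0]
    ring
  have hAt : (∑ c : Fin 3,
      dmat (g+1) (Sum.inr (t,i,a)) (kochCorner (g+1) (Sum.inr (t,i)) c)) + 3
      = 3 * dmat g c0 (kochCorner g t i) + 5 := by
    rw [Fin.sum_univ_three]
    rw [kc0 g t i, kc1 g t i, kc2 g t i]
    simp only [kochCorner, dmat]
    rw [← hc0, dmat_self g c0]
    fin_cases a <;> simp
  have key := sum_shift3
    (fun q : KochT g × Fin 3 => ∑ c : Fin 3,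
      dmat (g+1) (Sum.inr (t,i,a)) (kochCorner (g+1) (Sum.inr q) c))
    (fun q : KochT g × Fin 3 => 3 * dmat g c0 (kochCorner g q.1 q.2) + 5)
    (t,i) 3 hAt hFE
  beta_reduce at key
  have hEsum : (∑ q : KochT g × Fin 3, (3 * dmat g c0 (kochCorner g q.1 q.2) + 5))
      = 3 * Wn g c0 + 15*4^g := by
    rw [Finset.sum_add_distrib, ← Finset.mul_sum, Finset.sum_const, card_pairs g, ← Wn_eq]
    ring
  omega

lemma dummy_Wn_inr : True := trivial

lemma Dn_inl (g : ℕ) (x : KochV g) : Dn (g+1) (Sum.inl x) = Dn g x + 2 * Wn g x + 6*4^g := by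
  show (∑ y, dmat (g+1) (Sum.inl x) y) = _
  rw [sumV_split g (fun y => dmat (g+1) (Sum.inl x) y)]
  have h1 : (∑ y : KochV g, dmat (g+1) (Sum.inl x) (Sum.inl y)) = Dn g x := by
    refine Finset.sum_congr rfl fun y _ => ?_
    simp [dmat]
  have h2 : ∀ q : KochT g × Fin 3, (∑ b : Fin 2,
      dmat (g+1) (Sum.inl x) (Sum.inr (q.1, q.2, b)))
      = 2 * dmat g x (kochCorner g q.1 q.2) + 2 := by
    intro q
    rw [Fin.sum_univ_two]
    simp [dmat]
    ring
  rw [h1, Finset.sum_congr rfl fun q _ => h2 q, Finset.sum_add_distrib, ← Finset.mul_sum,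
    Finset.sum_const, card_pairs g, ← Wn_eq]
  ring

lemma dummy_Dn_inl : True := trivial

lemma Dn_inr (g : ℕ) (t : KochT g) (i : Fin 3) (a : Fin 2) :
    Dn (g+1) (Sum.inr (t,i,a)) + 2 = Dn g (kochCorner g t i) + 2 * Wn g (kochCorner g t i) + 14*4^g := by
  set c0 := kochCorner g t i with hc0
  show (∑ y, dmat (g+1) (Sum.inr (t,i,a)) y) + 2 = _
  rw [sumV_split g (fun y => dmat (g+1) (Sum.inr (t,i,a)) y)]
  have h1 : (∑ y : KochV g, dmat (g+1) (Sum.inr (t,i,a)) (Sum.inl y)) = Dn g c0 + (2*4^g+1) := by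
    have he : ∀ y : KochV g, dmat (g+1) (Sum.inr (t,i,a)) (Sum.inl y) = dmat g c0 y + 1 := by
      intro y; simp [dmat, hc0]
    rw [Finset.sum_congr rfl fun y _ => he y, Finset.sum_add_distrib, Finset.sum_const,
      Finset.card_univ, card_V g]
    simp [Dn]
  have hFE : ∀ q, q ≠ (t,i) → (∑ b : Fin 2,
      dmat (g+1) (Sum.inr (t,i,a)) (Sum.inr (q.1, q.2, b)))
      = 2 * dmat g c0 (kochCorner g q.1 q.2) + 4 := by
    intro q hq
    obtain ⟨s, j⟩ := q
    have hns : ¬ (t = s ∧ i = j) := by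
      rintro ⟨rfl, rfl⟩; exact hq rfl
    rw [Fin.sum_univ_two]
    simp only [dmat, hns, if_false]
    ring
  have hAt : (∑ b : Fin 2,
      dmat (g+1) (Sum.inr (t,i,a)) (Sum.inr ((t,i).1, (t,i).2, b))) + 3
      = 2 * dmat g c0 (kochCorner g t i) + 4 := by
    rw [Fin.sum_univ_two]
    simp only [dmat, and_self, if_true]
    rw [← hc0, dmat_self g c0]
    fin_cases a <;> simp
  have key := sum_shift3
    (fun q : KochT g × Fin 3 => ∑ b : Fin 2,
      dmat (g+1) (Sum.inr (t,i,a)) (Sum.inr (q.1, q.2, b)))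
    (fun q : KochT g × Fin 3 => 2 * dmat g c0 (kochCorner g q.1 q.2) + 4)
    (t,i) 3 hAt hFE
  beta_reduce at key
  have hEsum : (∑ q : KochT g × Fin 3, (2 * dmat g c0 (kochCorner g q.1 q.2) + 4))
      = 2 * Wn g c0 + 12*4^g := by
    rw [Finset.sum_add_distrib, ← Finset.mul_sum, Finset.sum_const, card_pairs g, ← Wn_eq]
    ring
  omega

lemma dummy_Dn_inr : True := trivial

lemma WD : ∀ (g : ℕ) (x : KochV g), 2 * Wn g x + 2*4^g = 3 * Dn g x
  | 0, x => by revert x; decide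
  | g+1, Sum.inl x => by
    have := WD g x
    rw [Wn_inl, Dn_inl, pow_succ]
    omega
  | g+1, Sum.inr (t,i,a) => by
    have h1 := Wn_inr g t i a
    have h2 := Dn_inr g t i a
    have h3 := WD g (kochCorner g t i)
    rw [pow_succ]
    omega

lemma dummy_WD : True := trivial

lemma Dn_inl' (g : ℕ) (x : KochV g) : Dn (g+1) (Sum.inl x) = 4 * Dn g x + 4*4^g := by
  have := WD g x
  rw [Dn_inl]
  omega

lemma dummy_Dn_inl' : True := trivial

lemma Dn_inr' (g : ℕ) (t : KochT g) (i : Fin 3) (a : Fin 2) :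
    Dn (g+1) (Sum.inr (t,i,a)) + 2 = 4 * Dn g (kochCorner g t i) + 12*4^g := by
  have h1 := Dn_inr g t i a
  have h2 := WD g (kochCorner g t i)
  omega

lemma dummy_Dn_inr' : True := trivial

/-! ### Labels -/

lemma label_le : ∀ (g : ℕ) (x : KochV g), ∀ k ∈ kochLabel g x, k ≤ g
  | 0, x => by simp [kochLabel]
  | g+1, Sum.inl x => fun k hk => (label_le g x k hk).trans (Nat.le_succ g)
  | g+1, Sum.inr (t,i,a) => by
    intro k hk
    simp only [kochLabel, List.mem_append, List.mem_singleton] at hk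
    rcases hk with hk | rfl
    · exact (label_le g (kochCorner g t i) k hk).trans (Nat.le_succ g)
    · exact le_refl _

lemma label_sorted : ∀ (g : ℕ) (x : KochV g), List.Chain' (· < ·) (kochLabel g x)
  | 0, x => by simp [kochLabel]; exact List.isChain_singleton _
  | g+1, Sum.inl x => label_sorted g x
  | g+1, Sum.inr (t,i,a) => by
    show List.Chain' (· < ·) (kochLabel g (kochCorner g t i) ++ [g+1])
    apply List.IsChain.append (label_sorted g (kochCorner g t i)) (List.isChain_singleton _)
    intro u hu v hv
    simp only [List.head?_cons, Option.mem_def, Option.some.injEq] at hv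
    subst hv
    have := label_le g (kochCorner g t i) u (List.mem_of_mem_getLast? hu)
    omega

lemma dummy_label_sorted : True := trivial

lemma dummy_label_le : True := trivial

lemma label_cons : ∀ (g : ℕ) (x : KochV g), kochLabel g x = 0 :: (kochLabel g x).tail
  | 0, x => rfl
  | g+1, Sum.inl x => label_cons g x
  | g+1, Sum.inr (t,i,a) => by
    show kochLabel g (kochCorner g t i) ++ [g+1]
        = 0 :: (kochLabel g (kochCorner g t i) ++ [g+1]).tail
    rw [label_cons g (kochCorner g t i)]
    simp

lemma dummy_label_cons : True := trivial

/-- The contribution of a label entry. -/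
def tf (g k : ℕ) : ℤ := 2*4^g - 2*4^(g-k)

lemma sum_map_four (L : List ℕ) (f : ℕ → ℤ) :
    (L.map (fun k => 4 * f k)).sum = 4 * (L.map f).sum := by
  induction L with
  | nil => simp
  | cons a l ih => simp only [List.map_cons, List.sum_cons, ih]; ring

lemma tf_mul (g k : ℕ) (hk : k ≤ g) : tf (g+1) k = 4 * tf g k := by
  unfold tf
  have : g + 1 - k = (g - k) + 1 := by omega
  rw [this, pow_succ, pow_succ]
  ring

lemma DF : ∀ (g : ℕ) (x : KochV g),
    (Dn g x : ℤ) = (g+2)*4^g + ((kochLabel g x).map (tf g)).sum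
  | 0, x => by
    have h : Dn 0 x = 2 := by revert x; decide
    show ((Dn 0 x : ℕ) : ℤ) = (0+2)*4^0 + (([0] : List ℕ).map (tf 0)).sum
    rw [h]
    simp [tf]
  | g+1, Sum.inl x => by
    have ih := DF g x
    have hrec := Dn_inl' g x
    have hz : (Dn (g+1) (Sum.inl x) : ℤ) = 4 * (Dn g x : ℤ) + 4*4^g := by
      rw [hrec]; push_cast; ring
    have hmap : ((kochLabel g x).map (tf (g+1))) = ((kochLabel g x).map (fun k => 4 * tf g k)) :=
      List.map_congr_left (fun k hk => tf_mul g k (label_le g x k hk))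
    show (Dn (g+1) (Sum.inl x) : ℤ)
        = ((g:ℤ)+1+2)*4^(g+1) + ((kochLabel g x).map (tf (g+1))).sum
    rw [hz, ih, hmap, sum_map_four _ (tf g)]
    push_cast
    ring
  | g+1, Sum.inr (t,i,a) => by
    set c0 := kochCorner g t i with hc0
    have ih := DF g c0
    have hrec := Dn_inr' g t i a
    have hz : (Dn (g+1) (Sum.inr (t,i,a)) : ℤ) = 4 * (Dn g c0 : ℤ) + 12*4^g - 2 := by
      have h2 : ((Dn (g+1) (Sum.inr (t,i,a)) : ℤ) + 2) = 4 * (Dn g c0 : ℤ) + 12*4^g := by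
        exact_mod_cast hrec
      linarith
    have hmap : ((kochLabel g c0).map (tf (g+1))) = ((kochLabel g c0).map (fun k => 4 * tf g k)) :=
      List.map_congr_left (fun k hk => tf_mul g k (label_le g c0 k hk))
    have htf : tf (g+1) (g+1) = 2*4^(g+1) - 2 := by
      unfold tf
      simp
    show (Dn (g+1) (Sum.inr (t,i,a)) : ℤ)
        = ((g:ℤ)+1+2)*4^(g+1) + (((kochLabel g c0) ++ [g+1]).map (tf (g+1))).sum
    rw [hz, ih, List.map_append, List.sum_append, hmap, sum_map_four _ (tf g)]
    simp only [List.map_cons, List.map_nil, List.sum_cons, List.sum_nil, htf]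
    push_cast
    ring

lemma dummy_DF : True := trivial

/-- Geometric bound for sorted lists of exponents. -/
lemma K_geom (g : ℕ) : ∀ (l : List ℕ) (a : ℕ), List.Chain' (· < ·) l →
    (∀ k ∈ l, k ≤ g) → (∀ k ∈ l, a ≤ k) →
    3 * ((l.map (fun k => (4:ℤ)^(g-k))).sum) ≤ 4 * 4^(g-a) - 1
  | [], a => by
    intro _ _ _
    have : (1:ℤ) ≤ 4^(g-a) := one_le_pow₀ (by norm_num)
    simp; nlinarith
  | (k :: l), a => by
    intro hc hle hge
    have hka : a ≤ k := hge k List.mem_cons_self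
    have hkg : k ≤ g := hle k List.mem_cons_self
    have hmono : (4:ℤ)^(g-k) ≤ 4^(g-a) :=
      pow_le_pow_right₀ (by norm_num) (Nat.sub_le_sub_left hka g)
    rcases l with _ | ⟨k', l'⟩
    · have hpos : (1:ℤ) ≤ 4^(g-a) := one_le_pow₀ (by norm_num)
      simp only [List.map_cons, List.map_nil, List.sum_cons, List.sum_nil, add_zero]
      linarith
    · have hc' : List.Chain' (· < ·) (k' :: l') := hc.tail
      have hkk' : k < k' := (List.isChain_cons_cons.mp hc).1
      have hk'g : k' ≤ g := hle k' (by simp)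
      have hkg' : k < g := lt_of_lt_of_le hkk' hk'g
      have hge' : ∀ m ∈ (k' :: l'), k+1 ≤ m := by
        have hp := (List.isChain_iff_pairwise.mp hc)
        intro m hm
        exact (List.rel_of_pairwise_cons hp hm)
      have ih := K_geom g (k' :: l') (k+1) hc' (fun m hm => hle m (List.mem_cons_of_mem _ hm)) hge'
      have hstep : (4:ℤ) * 4^(g-(k+1)) = 4^(g-k) := by
        have : g - k = (g - (k+1)) + 1 := by omega
        rw [this, pow_succ]; ring
      simp only [List.map_cons, List.sum_cons] at ih ⊢
      linarith

lemma dummy_K_geom : True := trivial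

/-! ### Adjacency structure -/

instance kochAdjDec (g : ℕ) : DecidableRel (kochGraph g).Adj := by
  unfold kochGraph
  intro x y
  exact inferInstanceAs (Decidable (_ ∧ _))

instance kochAdjDecL (g : ℕ) (x : KochV g) (z : KochV (g+1)) :
    Decidable ((kochGraph (g+1)).Adj (Sum.inl x) z) := kochAdjDec (g+1) _ _
instance kochAdjDecR (g : ℕ) (p : KochT g × Fin 3 × Fin 2) (z : KochV (g+1)) :
    Decidable ((kochGraph (g+1)).Adj (Sum.inr p) z) := kochAdjDec (g+1) _ _
instance kochAdjDecLL (g : ℕ) (x y : KochV g) :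
    Decidable ((kochGraph (g+1)).Adj (Sum.inl x) (Sum.inl y)) := kochAdjDec (g+1) _ _
instance kochAdjDecLR (g : ℕ) (x : KochV g) (q : KochT g × Fin 3 × Fin 2) :
    Decidable ((kochGraph (g+1)).Adj (Sum.inl x) (Sum.inr q)) := kochAdjDec (g+1) _ _
instance kochAdjDecRL (g : ℕ) (p : KochT g × Fin 3 × Fin 2) (y : KochV g) :
    Decidable ((kochGraph (g+1)).Adj (Sum.inr p) (Sum.inl y)) := kochAdjDec (g+1) _ _
instance kochAdjDecRR (g : ℕ) (p q : KochT g × Fin 3 × Fin 2) :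
    Decidable ((kochGraph (g+1)).Adj (Sum.inr p) (Sum.inr q)) := kochAdjDec (g+1) _ _
instance kochEqDecL (g : ℕ) (a : KochV (g+1)) (x : KochV g) :
    Decidable (a = Sum.inl x) := kochVDecEq (g+1) _ _
instance kochEqDecR (g : ℕ) (a : KochV (g+1)) (p : KochT g × Fin 3 × Fin 2) :
    Decidable (a = Sum.inr p) := kochVDecEq (g+1) _ _

@[simp] lemma inl_eq_inl (g : ℕ) (x y : KochV g) :
    @Eq (KochV (g+1)) (Sum.inl x) (Sum.inl y) ↔ x = y :=
  ⟨fun h => Sum.inl.inj h, fun h => by rw [h]⟩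
@[simp] lemma inr_eq_inr (g : ℕ) (p q : KochT g × Fin 3 × Fin 2) :
    @Eq (KochV (g+1)) (Sum.inr p) (Sum.inr q) ↔ p = q :=
  ⟨fun h => Sum.inr.inj h, fun h => by rw [h]⟩
@[simp] lemma inl_ne_inr (g : ℕ) (x : KochV g) (p) :
    @Eq (KochV (g+1)) (Sum.inl x) (Sum.inr p) ↔ False :=
  ⟨fun h => (by cases h), False.elim⟩
@[simp] lemma inr_ne_inl (g : ℕ) (x : KochV g) (p) :
    @Eq (KochV (g+1)) (Sum.inr p) (Sum.inl x) ↔ False :=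
  ⟨fun h => (by cases h), False.elim⟩

lemma corner_inr (g : ℕ) (t : KochT g) (i : Fin 3) :
    kochCorner (g+1) (Sum.inr (t,i)) 0 = Sum.inl (kochCorner g t i)
    ∧ kochCorner (g+1) (Sum.inr (t,i)) 1 = Sum.inr (t,i,0)
    ∧ kochCorner (g+1) (Sum.inr (t,i)) 2 = Sum.inr (t,i,1) := by
  refine ⟨?_, ?_, ?_⟩ <;> simp [kochCorner]

lemma adj_iff (g : ℕ) (x y : KochV g) : (kochGraph g).Adj x y ↔
    x ≠ y ∧ ∃ (t : KochT g) (c c' : Fin 3),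
      c ≠ c' ∧ x = kochCorner g t c ∧ y = kochCorner g t c' := by
  show (SimpleGraph.fromRel _).Adj x y ↔ _
  rw [SimpleGraph.fromRel_adj]
  constructor
  · rintro ⟨hne, ⟨t,c,c',h1,h2,h3⟩ | ⟨t,c,c',h1,h2,h3⟩⟩
    · exact ⟨hne, t, c, c', h1, h2, h3⟩
    · exact ⟨hne, t, c', c, h1.symm, h3, h2⟩
  · rintro ⟨hne, h⟩; exact ⟨hne, Or.inl h⟩

lemma adj0 (x y : KochV 0) : (kochGraph 0).Adj x y ↔ x ≠ y := by
  rw [adj_iff]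
  constructor
  · exact fun h => h.1
  · intro h
    exact ⟨h, (), x, y, h, rfl, rfl⟩

lemma dummy_adj0 : True := trivial

lemma adj_inl_inl (g : ℕ) (x y : KochV g) :
    (kochGraph (g+1)).Adj (Sum.inl x) (Sum.inl y) ↔ (kochGraph g).Adj x y := by
  rw [adj_iff (g+1) (Sum.inl x) (Sum.inl y), adj_iff]
  constructor
  · rintro ⟨hne, t, c, c', h1, h2, h3⟩
    cases t with
    | inl t =>
      simp only [kochCorner, inl_eq_inl] at h2 h3
      exact ⟨fun h => hne (by rw [h]), t, c, c', h1, h2, h3⟩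
    | inr p =>
      obtain ⟨t, i⟩ := p
      fin_cases c <;> fin_cases c' <;> simp_all [kochCorner]
  · rintro ⟨hne, t, c, c', h1, h2, h3⟩
    exact ⟨fun h => hne (Sum.inl.inj h), Sum.inl t, c, c', h1,
      by simp only [kochCorner, inl_eq_inl]; exact h2,
      by simp only [kochCorner, inl_eq_inl]; exact h3⟩

lemma dummy_adj_inl_inl : True := trivial

lemma adj_inl_inr (g : ℕ) (x : KochV g) (t : KochT g) (i : Fin 3) (a : Fin 2) :
    (kochGraph (g+1)).Adj (Sum.inl x) (Sum.inr (t,i,a)) ↔ x = kochCorner g t i := by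
  rw [adj_iff (g+1) (Sum.inl x) (Sum.inr (t,i,a))]
  constructor
  · rintro ⟨hne, s, c, c', h1, h2, h3⟩
    cases s with
    | inl s => fin_cases c' <;> simp_all [kochCorner]
    | inr p =>
      obtain ⟨s, j⟩ := p
      fin_cases c <;> fin_cases c' <;> simp_all [kochCorner]
  · rintro rfl
    refine ⟨(fun h => by cases h), Sum.inr (t,i), 0, (if a = 0 then 1 else 2), ?_, ?_, ?_⟩
    · fin_cases a <;> decide
    · simp [kochCorner]
    · fin_cases a <;> simp [kochCorner]

lemma dummy_adj_inl_inr : True := trivial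

lemma adj_inr_inr (g : ℕ) (t t' : KochT g) (i i' : Fin 3) (a a' : Fin 2) :
    (kochGraph (g+1)).Adj (Sum.inr (t,i,a)) (Sum.inr (t',i',a')) ↔ (t = t' ∧ i = i' ∧ a ≠ a') := by
  rw [adj_iff (g+1) (Sum.inr (t,i,a)) (Sum.inr (t',i',a'))]
  constructor
  · rintro ⟨hne, s, c, c', h1, h2, h3⟩
    cases s with
    | inl s => fin_cases c <;> simp_all [kochCorner]
    | inr p =>
      obtain ⟨s, j⟩ := p
      have hne' : ¬ (t = t' ∧ i = i' ∧ a = a') := by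
        rintro ⟨rfl, rfl, rfl⟩; exact hne rfl
      fin_cases c <;> fin_cases c' <;> simp_all [kochCorner] <;> aesop
  · rintro ⟨rfl, rfl, ha⟩
    refine ⟨(fun h => ha (by simpa using Sum.inr.inj h)), Sum.inr (t,i), (if a = 0 then 1 else 2), (if a' = 0 then 1 else 2),
      ?_, ?_, ?_⟩
    · fin_cases a <;> fin_cases a' <;> first | decide | exact absurd rfl ha
    · fin_cases a <;> simp [kochCorner]
    · fin_cases a' <;> simp [kochCorner]

lemma dummy_adj_inr_inr : True := trivial

lemma Tc_eq (g : ℕ) (x : KochV g) :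
    Tc g x = ∑ q : KochT g × Fin 3, if kochCorner g q.1 q.2 = x then 1 else 0 := rfl

lemma Tc_inl (g : ℕ) (x : KochV g) : Tc (g+1) (Sum.inl x) = 2 * Tc g x := by
  rw [Tc_eq (g+1) (Sum.inl x), sumT_split g (fun p => if kochCorner (g+1) p.1 p.2 = Sum.inl x then 1 else 0)]
  have h1 : (∑ p : KochT g × Fin 3,
      if kochCorner (g+1) (Sum.inl p.1) p.2 = Sum.inl x then 1 else 0) = Tc g x := by
    refine Finset.sum_congr rfl fun p _ => ?_
    simp [kochCorner]
  have h2 : ∀ q : KochT g × Fin 3, (∑ c : Fin 3,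
      if kochCorner (g+1) (Sum.inr q) c = Sum.inl x then 1 else 0)
      = if kochCorner g q.1 q.2 = x then 1 else 0 := by
    intro q
    rw [Fin.sum_univ_three]
    simp [kochCorner]
  rw [h1, Finset.sum_congr rfl fun q _ => h2 q, ← Tc_eq]
  ring

lemma dummy_Tc_inl : True := trivial

lemma Tc_inr (g : ℕ) (t : KochT g) (i : Fin 3) (a : Fin 2) :
    Tc (g+1) (Sum.inr (t,i,a)) = 1 := by
  rw [Tc_eq (g+1) (Sum.inr (t,i,a)), sumT_split g (fun p => if kochCorner (g+1) p.1 p.2 = Sum.inr (t,i,a) then 1 else 0)]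
  have h1 : (∑ p : KochT g × Fin 3,
      if kochCorner (g+1) (Sum.inl p.1) p.2 = Sum.inr (t,i,a) then 1 else 0) = 0 := by
    refine Finset.sum_eq_zero fun p _ => ?_
    simp [kochCorner]
  have h2 : ∀ q : KochT g × Fin 3, (∑ c : Fin 3,
      if kochCorner (g+1) (Sum.inr q) c = Sum.inr (t,i,a) then 1 else 0)
      = if q = (t,i) then 1 else 0 := by
    intro q
    obtain ⟨s, j⟩ := q
    rw [Fin.sum_univ_three]
    fin_cases a <;> simp [kochCorner, Prod.ext_iff] <;> tauto
  rw [h1, Finset.sum_congr rfl fun q _ => h2 q, Finset.sum_ite_eq' Finset.univ (t,i) (fun _ => 1)]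
  simp

lemma dummy_Tc_inr : True := trivial

lemma Tc0 (x : KochV 0) : Tc 0 x = 1 := by revert x; decide

lemma adj_inr_inl (g : ℕ) (x : KochV g) (t : KochT g) (i : Fin 3) (a : Fin 2) :
    (kochGraph (g+1)).Adj (Sum.inr (t,i,a)) (Sum.inl x) ↔ x = kochCorner g t i := by
  rw [SimpleGraph.adj_comm (kochGraph (g+1)) (Sum.inr (t,i,a)) (Sum.inl x)]
  exact adj_inl_inr g x t i a

lemma K_deg : ∀ (g : ℕ) (x : KochV g),
    (∑ z, (if (kochGraph g).Adj x z then (1:ℝ) else 0)) = 2 * Tc g x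
  | 0, x => by
    have h1 : ∀ z, (if (kochGraph 0).Adj x z then (1:ℝ) else 0)
        = 1 - (if x = z then 1 else 0) := by
      intro z
      rw [if_congr (adj0 x z) rfl rfl]
      by_cases h : x = z <;> simp [h]
    rw [Finset.sum_congr rfl fun z _ => h1 z, Finset.sum_sub_distrib, Finset.sum_const,
      Finset.sum_ite_eq Finset.univ x (fun _ => (1:ℝ)), Tc0 x]
    have h2 : (Finset.univ : Finset (KochV 0)).card = 3 := by
      rw [Finset.card_univ, card_V 0]; norm_num
    rw [h2]
    norm_num
  | g+1, Sum.inl x => by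
    rw [sumV_split g (fun z => if (kochGraph (g+1)).Adj (Sum.inl x) z then (1:ℝ) else 0)]
    have h1 : (∑ z : KochV g, if (kochGraph (g+1)).Adj (Sum.inl x) (Sum.inl z) then (1:ℝ) else 0)
        = 2 * Tc g x := by
      rw [Finset.sum_congr rfl fun z _ => by rw [if_congr (adj_inl_inl g x z) rfl rfl]]
      exact K_deg g x
    have h2 : ∀ q : KochT g × Fin 3, (∑ b : Fin 2,
        if (kochGraph (g+1)).Adj (Sum.inl x) (Sum.inr (q.1, q.2, b)) then (1:ℝ) else 0)
        = if kochCorner g q.1 q.2 = x then 2 else 0 := by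
      intro q
      rw [Fin.sum_univ_two, if_congr (adj_inl_inr g x q.1 q.2 0) rfl rfl,
        if_congr (adj_inl_inr g x q.1 q.2 1) rfl rfl]
      by_cases h : x = kochCorner g q.1 q.2
      · rw [if_pos h, if_pos h.symm]; norm_num
      · rw [if_neg h, if_neg (fun hc => h hc.symm)]; norm_num
    rw [h1, Finset.sum_congr rfl fun q _ => h2 q]
    have h3 : (∑ q : KochT g × Fin 3, if kochCorner g q.1 q.2 = x then (2:ℝ) else 0)
        = 2 * Tc g x := by
      rw [Tc_eq]
      push_cast
      rw [Finset.mul_sum]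
      refine Finset.sum_congr rfl fun q _ => ?_
      split_ifs <;> norm_num
    rw [h3, Tc_inl]
    push_cast
    ring
  | g+1, Sum.inr (t,i,a) => by
    rw [sumV_split g (fun z => if (kochGraph (g+1)).Adj (Sum.inr (t,i,a)) z then (1:ℝ) else 0)]
    have h1 : (∑ z : KochV g, if (kochGraph (g+1)).Adj (Sum.inr (t,i,a)) (Sum.inl z) then (1:ℝ) else 0)
        = 1 := by
      rw [Finset.sum_congr rfl fun z _ => by rw [if_congr (adj_inr_inl g z t i a) rfl rfl]]
      rw [Finset.sum_ite_eq' Finset.univ (kochCorner g t i) (fun _ => (1:ℝ))]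
      simp
    have h2 : ∀ q : KochT g × Fin 3, (∑ b : Fin 2,
        if (kochGraph (g+1)).Adj (Sum.inr (t,i,a)) (Sum.inr (q.1, q.2, b)) then (1:ℝ) else 0)
        = if q = (t,i) then 1 else 0 := by
      intro q
      obtain ⟨s, j⟩ := q
      rw [Fin.sum_univ_two, if_congr (adj_inr_inr g t s i j a 0) rfl rfl,
        if_congr (adj_inr_inr g t s i j a 1) rfl rfl]
      by_cases h : (s, j) = (t, i)
      · obtain ⟨h1, h2⟩ := Prod.ext_iff.mp h
        simp only at h1 h2
        subst h1; subst h2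
        rw [if_pos rfl]
        fin_cases a <;> norm_num
      · have h' : ¬ (t = s ∧ i = j) := by
          rintro ⟨rfl, rfl⟩; exact h rfl
        have hn1 : ¬ (t = s ∧ i = j ∧ a ≠ (0:Fin 2)) := fun ⟨u,v,_⟩ => h' ⟨u,v⟩
        have hn2 : ¬ (t = s ∧ i = j ∧ a ≠ (1:Fin 2)) := fun ⟨u,v,_⟩ => h' ⟨u,v⟩
        rw [if_neg hn1, if_neg hn2, if_neg h]
        norm_num
    rw [h1, Finset.sum_congr rfl fun q _ => h2 q,
      Finset.sum_ite_eq' Finset.univ (t,i) (fun _ => (1:ℝ)), Tc_inr]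
    norm_num

lemma dummy_K_deg : True := trivial

lemma Tc_sum (g : ℕ) (x : KochV g) (c : ℝ) :
    (∑ q : KochT g × Fin 3, if kochCorner g q.1 q.2 = x then c else 0) = (Tc g x : ℝ) * c := by
  have h : ((Tc g x : ℕ) : ℝ) = ∑ q : KochT g × Fin 3,
      if kochCorner g q.1 q.2 = x then (1:ℝ) else 0 := by
    rw [Tc_eq]
    push_cast
    rfl
  rw [h, Finset.sum_mul]
  refine Finset.sum_congr rfl fun q _ => ?_
  split_ifs <;> simp

lemma K_star : ∀ (g : ℕ) (x y : KochV g),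
    (∑ z, (if (kochGraph g).Adj x z then (dmat g z y : ℝ) else 0))
      = 2*(Tc g x)*((dmat g x y : ℝ) + 1) - 3 + (if x = y then 3 else 0)
  | 0, x, y => by
    have hD : (∑ z : KochV 0, dmat 0 z y) = 2 := by revert y; decide
    have hA : ∀ z, (if (kochGraph 0).Adj x z then (dmat 0 z y : ℝ) else 0)
        = (dmat 0 z y : ℝ) - (if x = z then (dmat 0 z y : ℝ) else 0) := by
      intro z
      rw [if_congr (adj0 x z) rfl rfl]
      by_cases h : x = z <;> simp [h]
    rw [Finset.sum_congr rfl fun z _ => hA z, Finset.sum_sub_distrib,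
      Finset.sum_ite_eq Finset.univ x (fun z => (dmat 0 z y : ℝ))]
    have hDr : (∑ z : KochV 0, (dmat 0 z y : ℝ)) = 2 := by
      rw [← Nat.cast_sum, hD]; norm_num
    rw [hDr, Tc0 x]
    by_cases h : x = y
    · subst h
      rw [dmat_self 0 x]
      simp
    · have h1 : dmat 0 x y = 1 := by simp [dmat, h]
      rw [h1, if_neg h]
      simp only [Finset.mem_univ, ite_true]
      norm_num
  | g+1, Sum.inl x, Sum.inl y => by
    rw [sumV_split g (fun z => if (kochGraph (g+1)).Adj (Sum.inl x) z
      then (dmat (g+1) z (Sum.inl y) : ℝ) else 0)]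
    have e1 : ∀ z : KochV g, (if (kochGraph (g+1)).Adj (Sum.inl x) (Sum.inl z)
        then (dmat (g+1) (Sum.inl z) (Sum.inl y) : ℝ) else 0)
        = if (kochGraph g).Adj x z then (dmat g z y : ℝ) else 0 := by
      intro z
      refine if_congr (adj_inl_inl g x z) ?_ rfl
      norm_num [dmat]
    have e2 : ∀ q : KochT g × Fin 3, (∑ b : Fin 2,
        if (kochGraph (g+1)).Adj (Sum.inl x) (Sum.inr (q.1, q.2, b))
        then (dmat (g+1) (Sum.inr (q.1, q.2, b)) (Sum.inl y) : ℝ) else 0)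
        = if kochCorner g q.1 q.2 = x then 2*((dmat g x y : ℝ) + 1) else 0 := by
      intro q
      rw [Fin.sum_univ_two, if_congr (adj_inl_inr g x q.1 q.2 0) rfl rfl,
        if_congr (adj_inl_inr g x q.1 q.2 1) rfl rfl]
      by_cases h : x = kochCorner g q.1 q.2
      · have hv : ∀ b : Fin 2, (dmat (g+1) (Sum.inr (q.1, q.2, b)) (Sum.inl y) : ℝ)
            = (dmat g x y : ℝ) + 1 := by
          intro b
          rw [h]
          norm_num [dmat]
        rw [hv 0, hv 1, if_pos h, if_pos h.symm]
        ring
      · rw [if_neg h, if_neg h, if_neg (fun hc => h hc.symm)]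
        norm_num
    rw [Finset.sum_congr rfl fun z _ => e1 z, Finset.sum_congr rfl fun q _ => e2 q,
      K_star g x y, Tc_sum g x (2*((dmat g x y : ℝ) + 1))]
    have hd : (dmat (g+1) (Sum.inl x) (Sum.inl y) : ℝ) = (dmat g x y : ℝ) := by
      norm_num [dmat]
    rw [hd, Tc_inl]
    by_cases hxy : x = y
    · rw [if_pos hxy, if_pos (by rw [hxy] : @Eq (KochV (g+1)) (Sum.inl x) (Sum.inl y))]
      push_cast
      ring
    · rw [if_neg hxy, if_neg (fun hc : @Eq (KochV (g+1)) (Sum.inl x) (Sum.inl y) => hxy (Sum.inl.inj hc))]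
      push_cast
      ring
  | g+1, Sum.inl x, Sum.inr (s,j,b) => by
    set cs := kochCorner g s j with hcs
    rw [sumV_split g (fun z => if (kochGraph (g+1)).Adj (Sum.inl x) z
      then (dmat (g+1) z (Sum.inr (s,j,b)) : ℝ) else 0)]
    have e1 : ∀ z : KochV g, (if (kochGraph (g+1)).Adj (Sum.inl x) (Sum.inl z)
        then (dmat (g+1) (Sum.inl z) (Sum.inr (s,j,b)) : ℝ) else 0)
        = (if (kochGraph g).Adj x z then (dmat g z cs : ℝ) else 0)
          + (if (kochGraph g).Adj x z then (1:ℝ) else 0) := by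
      intro z
      rw [if_congr (adj_inl_inl g x z) rfl rfl]
      by_cases h : (kochGraph g).Adj x z
      · rw [if_pos h, if_pos h, if_pos h]
        norm_num [dmat, hcs]
      · rw [if_neg h, if_neg h, if_neg h]
        norm_num
    rw [Finset.sum_congr rfl fun z _ => e1 z, Finset.sum_add_distrib, K_star g x cs, K_deg g x]
    have e2 : ∀ q : KochT g × Fin 3, (∑ b' : Fin 2,
        if (kochGraph (g+1)).Adj (Sum.inl x) (Sum.inr (q.1, q.2, b'))
        then (dmat (g+1) (Sum.inr (q.1, q.2, b')) (Sum.inr (s,j,b)) : ℝ) else 0)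
        = if kochCorner g q.1 q.2 = x
          then (if q = (s,j) then (1:ℝ) else 2*((dmat g x cs : ℝ) + 2)) else 0 := by
      intro q
      rw [Fin.sum_univ_two, if_congr (adj_inl_inr g x q.1 q.2 0) rfl rfl,
        if_congr (adj_inl_inr g x q.1 q.2 1) rfl rfl]
      by_cases h : x = kochCorner g q.1 q.2
      · rw [if_pos h, if_pos h, if_pos h.symm]
        by_cases hq : q = (s,j)
        · rw [if_pos hq]
          obtain ⟨h1, h2⟩ := Prod.ext_iff.mp hq
          simp only at h1 h2
          subst h1; subst h2
          have hv : ∀ b' : Fin 2, (dmat (g+1) (Sum.inr (q.1, q.2, b')) (Sum.inr (q.1,q.2,b)) : ℝ)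
              = if b' = b then 0 else 1 := by
            intro b'
            have : dmat (g+1) (Sum.inr (q.1, q.2, b')) (Sum.inr (q.1,q.2,b))
                = if b' = b then 0 else 1 := by
              simp [dmat]
            rw [this]
            split_ifs <;> norm_num
          rw [hv 0, hv 1]
          fin_cases b <;> norm_num
        · rw [if_neg hq]
          have hns : ¬ (q.1 = s ∧ q.2 = j) := fun hc => hq (Prod.ext_iff.mpr ⟨hc.1, hc.2⟩)
          have hv : ∀ b' : Fin 2, (dmat (g+1) (Sum.inr (q.1, q.2, b')) (Sum.inr (s,j,b)) : ℝ)
              = (dmat g x cs : ℝ) + 2 := by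
            intro b'
            have : dmat (g+1) (Sum.inr (q.1, q.2, b')) (Sum.inr (s,j,b))
                = dmat g (kochCorner g q.1 q.2) cs + 2 := by
              simp [dmat, hns, hcs]
            rw [this, ← h]
            push_cast
            ring
          rw [hv 0, hv 1]
          ring
      · rw [if_neg h, if_neg h, if_neg (fun hc => h hc.symm)]
        norm_num
    rw [Finset.sum_congr rfl fun q _ => e2 q]
    have hdx : (dmat (g+1) (Sum.inl x) (Sum.inr (s,j,b)) : ℝ) = (dmat g x cs : ℝ) + 1 := by
      norm_num [dmat, hcs]
    rw [hdx, Tc_inl]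
    by_cases hx : cs = x
    · -- the mother case
      have hcx : kochCorner g (s,j).1 (s,j).2 = x := hx
      have hd0 : dmat g x cs = 0 := by rw [← hx]; exact dmat_self g cs
      have hsum : (∑ q : KochT g × Fin 3, if kochCorner g q.1 q.2 = x
          then (if q = (s,j) then (1:ℝ) else 2*((dmat g x cs : ℝ) + 2)) else 0)
          = (Tc g x : ℝ) * (2*((dmat g x cs : ℝ) + 2)) - 3 := by
        have hF := Finset.add_sum_erase Finset.univ (fun q : KochT g × Fin 3 =>
          if kochCorner g q.1 q.2 = x
          then (if q = (s,j) then (1:ℝ) else 2*((dmat g x cs : ℝ) + 2)) else 0)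
          (Finset.mem_univ (s,j))
        have hE := Finset.add_sum_erase Finset.univ (fun q : KochT g × Fin 3 =>
          if kochCorner g q.1 q.2 = x then 2*((dmat g x cs : ℝ) + 2) else 0)
          (Finset.mem_univ (s,j))
        have her : (∑ q ∈ Finset.univ.erase (s,j), if kochCorner g q.1 q.2 = x
            then (if q = (s,j) then (1:ℝ) else 2*((dmat g x cs : ℝ) + 2)) else 0)
            = ∑ q ∈ Finset.univ.erase (s,j), (if kochCorner g q.1 q.2 = x
              then 2*((dmat g x cs : ℝ) + 2) else 0) := by
          refine Finset.sum_congr rfl fun q hq => ?_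
          have hne := Finset.ne_of_mem_erase hq
          rw [if_neg hne]
        rw [Tc_sum g x (2*((dmat g x cs : ℝ) + 2))] at hE
        beta_reduce at hF hE
        have hhead1 : (if kochCorner g ((s,j) : KochT g × Fin 3).1 ((s,j) : KochT g × Fin 3).2 = x
            then (if ((s,j) : KochT g × Fin 3) = (s,j) then (1:ℝ)
              else 2*((dmat g x cs : ℝ) + 2)) else 0) = 1 := by
          rw [if_pos hcx, if_pos rfl]
        have hhead2 : (if kochCorner g ((s,j) : KochT g × Fin 3).1 ((s,j) : KochT g × Fin 3).2 = x
            then 2*((dmat g x cs : ℝ) + 2) else 0) = 2*((dmat g x cs : ℝ) + 2) := by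
          rw [if_pos hcx]
        rw [← hF, hhead1, her, ← hE, hhead2, hd0]
        push_cast
        ring
      have hne2 : ¬ @Eq (KochV (g+1)) (Sum.inl x) (Sum.inr (s,j,b)) := fun hc => by cases hc
      rw [hsum, if_pos hx.symm, if_neg hne2, hd0]
      push_cast
      ring
    · have hsum : (∑ q : KochT g × Fin 3, if kochCorner g q.1 q.2 = x
          then (if q = (s,j) then (1:ℝ) else 2*((dmat g x cs : ℝ) + 2)) else 0)
          = (Tc g x : ℝ) * (2*((dmat g x cs : ℝ) + 2)) := by
        rw [← Tc_sum g x (2*((dmat g x cs : ℝ) + 2))]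
        refine Finset.sum_congr rfl fun q _ => ?_
        by_cases hc : kochCorner g q.1 q.2 = x
        · rw [if_pos hc, if_pos hc]
          have hq : q ≠ (s,j) := by
            rintro rfl
            exact hx hc
          rw [if_neg hq]
        · rw [if_neg hc, if_neg hc]
      rw [hsum]
      simp only [if_neg (fun hc => hx hc.symm : ¬ x = cs)]
      have : ¬ @Eq (KochV (g+1)) (Sum.inl x) (Sum.inr (s,j,b)) := fun hc => by cases hc
      rw [if_neg this]
      push_cast
      ring
  | g+1, Sum.inr (t,i,a), y' => by
    set c0 := kochCorner g t i with hc0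
    rw [sumV_split g (fun z => if (kochGraph (g+1)).Adj (Sum.inr (t,i,a)) z
      then (dmat (g+1) z y' : ℝ) else 0)]
    have e1 : (∑ z : KochV g, if (kochGraph (g+1)).Adj (Sum.inr (t,i,a)) (Sum.inl z)
        then (dmat (g+1) (Sum.inl z) y' : ℝ) else 0)
        = (dmat (g+1) (Sum.inl c0) y' : ℝ) := by
      rw [Finset.sum_congr rfl fun z _ => by rw [if_congr (adj_inr_inl g z t i a) rfl rfl]]
      rw [Finset.sum_ite_eq' Finset.univ c0 (fun z => (dmat (g+1) (Sum.inl z) y' : ℝ))]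
      simp
    set a' : Fin 2 := if a = 0 then 1 else 0 with ha'
    have e2 : ∀ q : KochT g × Fin 3, (∑ b' : Fin 2,
        if (kochGraph (g+1)).Adj (Sum.inr (t,i,a)) (Sum.inr (q.1, q.2, b'))
        then (dmat (g+1) (Sum.inr (q.1, q.2, b')) y' : ℝ) else 0)
        = if q = (t,i) then (dmat (g+1) (Sum.inr (t,i,a')) y' : ℝ) else 0 := by
      intro q
      obtain ⟨s, j⟩ := q
      rw [Fin.sum_univ_two, if_congr (adj_inr_inr g t s i j a 0) rfl rfl,
        if_congr (adj_inr_inr g t s i j a 1) rfl rfl]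
      by_cases h : (s,j) = (t,i)
      · obtain ⟨h1, h2⟩ := Prod.ext_iff.mp h
        simp only at h1 h2
        subst h1; subst h2
        fin_cases a <;> simp [ha']
      · have h' : ¬ (t = s ∧ i = j) := by
          rintro ⟨rfl, rfl⟩; exact h rfl
        have hn1 : ¬ (t = s ∧ i = j ∧ a ≠ (0:Fin 2)) := fun ⟨u,v,_⟩ => h' ⟨u,v⟩
        have hn2 : ¬ (t = s ∧ i = j ∧ a ≠ (1:Fin 2)) := fun ⟨u,v,_⟩ => h' ⟨u,v⟩
        rw [if_neg hn1, if_neg hn2, if_neg h]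
        norm_num
    rw [e1, Finset.sum_congr rfl fun q _ => e2 q,
      Finset.sum_ite_eq' Finset.univ (t,i) (fun _ => (dmat (g+1) (Sum.inr (t,i,a')) y' : ℝ)),
      Tc_inr]
    simp only [Finset.mem_univ, ite_true]
    have haa' : a' ≠ a := by fin_cases a <;> simp [ha']
    cases y' with
    | inl y =>
      have hv1 : (dmat (g+1) (Sum.inl c0) (Sum.inl y) : ℝ) = (dmat g c0 y : ℝ) := by
        norm_num [dmat]
      have hv2 : (dmat (g+1) (Sum.inr (t,i,a')) (Sum.inl y) : ℝ) = (dmat g c0 y : ℝ) + 1 := by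
        norm_num [dmat, hc0]
      have hv3 : (dmat (g+1) (Sum.inr (t,i,a)) (Sum.inl y) : ℝ) = (dmat g c0 y : ℝ) + 1 := by
        norm_num [dmat, hc0]
      have hne : ¬ @Eq (KochV (g+1)) (Sum.inr (t,i,a)) (Sum.inl y) := fun hc => by cases hc
      rw [hv1, hv2, hv3, if_neg hne]
      push_cast
      ring
    | inr p =>
      obtain ⟨s, j, b⟩ := p
      by_cases hq : (s, j) = (t, i)
      · obtain ⟨h1, h2⟩ := Prod.ext_iff.mp hq
        simp only at h1 h2
        subst h1; subst h2
        have hv1 : (dmat (g+1) (Sum.inl c0) (Sum.inr (s,j,b)) : ℝ) = 1 := by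
          have : dmat (g+1) (Sum.inl c0) (Sum.inr (s,j,b)) = dmat g c0 (kochCorner g s j) + 1 := by
            simp [dmat]
          rw [this, ← hc0, dmat_self g c0]
          norm_num
        have hv2 : ∀ u v : Fin 2, (dmat (g+1) (Sum.inr (s,j,u)) (Sum.inr (s,j,v)) : ℝ)
            = if u = v then 0 else 1 := by
          intro u v
          have : dmat (g+1) (Sum.inr (s,j,u)) (Sum.inr (s,j,v)) = if u = v then 0 else 1 := by
            simp [dmat]
          rw [this]
          split_ifs <;> norm_num
        rw [hv1, hv2 a' b, hv2 a b]
        fin_cases a <;> fin_cases b <;> simp [ha'] <;> norm_num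
      · have h' : ¬ (s = t ∧ j = i) := fun hc => hq (Prod.ext_iff.mpr ⟨hc.1, hc.2⟩)
        have hv1 : (dmat (g+1) (Sum.inl c0) (Sum.inr (s,j,b)) : ℝ)
            = (dmat g c0 (kochCorner g s j) : ℝ) + 1 := by
          norm_num [dmat]
        have hv2 : ∀ u : Fin 2, (dmat (g+1) (Sum.inr (t,i,u)) (Sum.inr (s,j,b)) : ℝ)
            = (dmat g c0 (kochCorner g s j) : ℝ) + 2 := by
          intro u
          have hnt : ¬ (t = s ∧ i = j) := fun hc => h' ⟨hc.1.symm, hc.2.symm⟩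
          have : dmat (g+1) (Sum.inr (t,i,u)) (Sum.inr (s,j,b))
              = dmat g c0 (kochCorner g s j) + 2 := by
            simp [dmat, hnt, hc0]
          rw [this]
          push_cast
          ring
        have hne : ¬ @Eq (KochV (g+1)) (Sum.inr (t,i,a)) (Sum.inr (s,j,b)) := by
          intro hc
          have h3 := Sum.inr.inj hc
          have h4 : t = s := (Prod.ext_iff.mp h3).1
          have h5 : i = j := (Prod.ext_iff.mp (Prod.ext_iff.mp h3).2).1
          exact h' ⟨h4.symm, h5.symm⟩
        rw [hv1, hv2 a', hv2 a, if_neg hne]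
        push_cast
        ring

lemma dummy_K_star : True := trivial

lemma glap_apply (g : ℕ) (x y : KochV g) :
    glap (kochGraph g) x y
      = (if x = y then ((kochGraph g).degree x : ℝ) else 0) - (if (kochGraph g).Adj x y then 1 else 0) := by
  have h : glap (kochGraph g) = SimpleGraph.lapMatrix ℝ (kochGraph g) := by
    unfold glap
    congr!
  rw [h, SimpleGraph.lapMatrix, Matrix.sub_apply, SimpleGraph.degMatrix, Matrix.diagonal_apply,
    SimpleGraph.adjMatrix_apply]

lemma dummy_glap_apply : True := trivial

lemma K_degree (g : ℕ) (x : KochV g) : ((kochGraph g).degree x : ℝ) = 2 * Tc g x := by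
  have h := K_deg g x
  have h2 : ((kochGraph g).degree x : ℝ) = ∑ z, (if (kochGraph g).Adj x z then (1:ℝ) else 0) := by
    rw [SimpleGraph.degree, SimpleGraph.neighborFinset_eq_filter, Finset.card_filter]
    push_cast
    rfl
  rw [h2, h]

lemma dummy_K_degree : True := trivial

/-! ### The inverse matrix -/

/-- Candidate inverse of `L + J/N`. -/
noncomputable def Mm (g : ℕ) : Matrix (KochV g) (KochV g) ℝ := fun x y =>
  -(1/3) * ((dmat g x y : ℝ) - (Dn g x : ℝ)/(2*4^g+1) - (Dn g y : ℝ)/(2*4^g+1)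
    + (∑ z, (Dn g z : ℝ))/(2*4^g+1)^2) + 1/(2*4^g+1)

lemma lap_row (g : ℕ) (x : KochV g) (f : KochV g → ℝ) :
    (∑ z, glap (kochGraph g) x z * f z)
      = 2*(Tc g x)*(f x) - ∑ z, (if (kochGraph g).Adj x z then f z else 0) := by
  have he : ∀ z, glap (kochGraph g) x z * f z
      = (if x = z then 2*(Tc g x)*(f z) else 0) - (if (kochGraph g).Adj x z then f z else 0) := by
    intro z
    rw [glap_apply, K_degree]
    split_ifs <;> ring
  rw [Finset.sum_congr rfl fun z _ => he z, Finset.sum_sub_distrib,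
    Finset.sum_ite_eq Finset.univ x (fun z => 2*(Tc g x : ℝ)*(f z))]
  simp

lemma S1 (g : ℕ) (x : KochV g) : (∑ z, glap (kochGraph g) x z) = 0 := by
  have h := lap_row g x (fun _ => 1)
  simp only [mul_one] at h
  rw [K_deg g x] at h
  simpa using h

lemma S4 (g : ℕ) (y : KochV g) : (∑ z, (dmat g z y : ℝ)) = (Dn g y : ℝ) := by
  rw [← Nat.cast_sum]
  congr 1
  rw [show Dn g y = ∑ z, dmat g y z from rfl]
  exact Finset.sum_congr rfl fun z _ => dmat_comm g z y

lemma S2 (g : ℕ) (x y : KochV g) :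
    (∑ z, glap (kochGraph g) x z * (dmat g z y : ℝ))
      = 3 - 2*(Tc g x) - (if x = y then 3 else 0) := by
  rw [lap_row g x (fun z => (dmat g z y : ℝ)), K_star g x y]
  rw [dmat_comm g x y]
  ring

lemma S3 (g : ℕ) (x : KochV g) :
    (∑ z, glap (kochGraph g) x z * (Dn g z : ℝ))
      = (2*4^g+1)*(3 - 2*(Tc g x)) - 3 := by
  have hsw : (∑ z, glap (kochGraph g) x z * (Dn g z : ℝ))
      = ∑ w, ∑ z, glap (kochGraph g) x z * (dmat g z w : ℝ) := by
    rw [Finset.sum_comm]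
    refine Finset.sum_congr rfl fun z _ => ?_
    rw [← Finset.mul_sum]
    congr 1
    rw [show Dn g z = ∑ w, dmat g z w from rfl]
    push_cast
    rfl
  rw [hsw, Finset.sum_congr rfl fun w _ => S2 g x w, Finset.sum_sub_distrib,
    Finset.sum_sub_distrib, Finset.sum_const, Finset.sum_const,
    Finset.sum_ite_eq Finset.univ x (fun _ => (3:ℝ)), Finset.card_univ, card_V g]
  simp only [Finset.mem_univ, ite_true, nsmul_eq_mul]
  push_cast
  ring

lemma K_inv (g : ℕ) :
    (glap (kochGraph g) + ((Fintype.card (KochV g) : ℝ))⁻¹ • JMat (KochV g)) * Mm g = 1 := by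
  have hN : ((Fintype.card (KochV g) : ℕ) : ℝ) = (2*4^g+1 : ℝ) := by
    rw [card_V g]; push_cast; ring
  have hnpos : (0:ℝ) < 2*4^g+1 := by positivity
  have hnne : (2*4^g+1 : ℝ) ≠ 0 := ne_of_gt hnpos
  ext x y
  rw [Matrix.mul_apply, Matrix.one_apply]
  set n : ℝ := 2*4^g+1 with hn
  set TT : ℝ := ∑ z, (Dn g z : ℝ) with hTT
  set c1 : ℝ := (Dn g y : ℝ)/(3*n) - TT/(3*n^2) + 1/n with hc1
  have hsummand : ∀ z, (glap (kochGraph g) + ((Fintype.card (KochV g) : ℝ))⁻¹ • JMat (KochV g)) x z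
        * Mm g z y
      = (-(1/3))*(glap (kochGraph g) x z * (dmat g z y : ℝ))
        + (1/(3*n))*(glap (kochGraph g) x z * (Dn g z : ℝ))
        + c1*(glap (kochGraph g) x z)
        + (-(1/(3*n)))*(dmat g z y : ℝ) + (1/(3*n^2))*(Dn g z : ℝ) + c1/n := by
    intro z
    rw [Matrix.add_apply, Matrix.smul_apply, hN]
    show (glap (kochGraph g) x z + n⁻¹ • (JMat (KochV g) x z)) * Mm g z y = _
    have hJ : JMat (KochV g) x z = 1 := rfl
    have hM : Mm g z y = -(1/3) * ((dmat g z y : ℝ) - (Dn g z : ℝ)/n - (Dn g y : ℝ)/n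
        + TT/n^2) + 1/n := rfl
    rw [hJ, hM, hc1, smul_eq_mul]
    field_simp
    ring
  rw [Finset.sum_congr rfl fun z _ => hsummand z]
  simp only [Finset.sum_add_distrib]
  rw [← Finset.mul_sum, ← Finset.mul_sum, ← Finset.mul_sum, ← Finset.mul_sum, ← Finset.mul_sum,
    Finset.sum_const, Finset.card_univ, card_V g, S1 g x, S2 g x y, S3 g x, S4 g y, ← hTT]
  simp only [nsmul_eq_mul, mul_zero]
  push_cast
  rw [← hn]
  by_cases hxy : x = y
  · rw [if_pos hxy, if_pos hxy, hc1]
    field_simp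
    ring
  · rw [if_neg hxy, if_neg hxy, hc1]
    field_simp
    ring

lemma dummy_K_inv : True := trivial

lemma K_gdag (g : ℕ) (x : KochV g) :
    gdag (kochGraph g) x x
      = 2*(Dn g x : ℝ)/(3*(2*4^g+1)) - (∑ z, (Dn g z : ℝ))/(3*(2*4^g+1)^2) := by
  have hnpos : (0:ℝ) < 2*4^g+1 := by positivity
  have hnne : (2*4^g+1 : ℝ) ≠ 0 := ne_of_gt hnpos
  have hN : ((Fintype.card (KochV g) : ℕ) : ℝ) = (2*4^g+1 : ℝ) := by
    rw [card_V g]; push_cast; ring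
  have hinv := Matrix.inv_eq_right_inv (K_inv g)
  unfold gdag
  rw [hinv, Matrix.sub_apply, Matrix.smul_apply]
  have hJ : JMat (KochV g) x x = 1 := rfl
  have hM : Mm g x x = -(1/3) * ((dmat g x x : ℝ) - (Dn g x : ℝ)/(2*4^g+1)
      - (Dn g x : ℝ)/(2*4^g+1) + (∑ z, (Dn g z : ℝ))/(2*4^g+1)^2) + 1/(2*4^g+1) := rfl
  rw [hJ, hM, smul_eq_mul, dmat_self g x, hN]
  push_cast
  field_simp
  ring

lemma dummy_K_gdag : True := trivial

lemma K_gdag_lt (g : ℕ) (x y : KochV g) (h : Dn g x < Dn g y) :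
    gdag (kochGraph g) x x < gdag (kochGraph g) y y := by
  rw [K_gdag g x, K_gdag g y]
  have hD : (Dn g x : ℝ) < (Dn g y : ℝ) := by exact_mod_cast h
  have h3 : (0:ℝ) < 3*(2*4^g+1) := by positivity
  have hlt : 2*(Dn g x : ℝ)/(3*(2*4^g+1)) < 2*(Dn g y : ℝ)/(3*(2*4^g+1)) :=
    (div_lt_div_iff_of_pos_right h3).mpr (by linarith)
  linarith

lemma dummy_K_gdag_lt : True := trivial

lemma K_gdag_eq (g : ℕ) (x y : KochV g) (h : Dn g x = Dn g y) :
    gdag (kochGraph g) x x = gdag (kochGraph g) y y := by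
  rw [K_gdag g x, K_gdag g y, h]

lemma dummy_K_gdag_eq : True := trivial

/-! ### Label comparisons -/

lemma tf_sum (g : ℕ) : ∀ (L : List ℕ),
    (L.map (tf g)).sum = 2*4^g*L.length - 2*((L.map fun k => (4:ℤ)^(g-k)).sum)
  | [] => by simp
  | k :: L => by
    simp only [List.map_cons, List.sum_cons, tf_sum g L, List.length_cons]
    unfold tf
    push_cast
    ring

lemma S_nonneg (g : ℕ) (L : List ℕ) : 0 ≤ ((L.map fun k => (4:ℤ)^(g-k)).sum) := by
  apply List.sum_nonneg
  intro v hv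
  obtain ⟨k, _, rfl⟩ := List.mem_map.mp hv
  positivity

lemma K_comp_len (g : ℕ) (x y : KochV g)
    (h : (kochLabel g y).length < (kochLabel g x).length) : Dn g y < Dn g x := by
  suffices hZ : (Dn g y : ℤ) < (Dn g x : ℤ) by exact_mod_cast hZ
  have dfx := DF g x
  have dfy := DF g y
  obtain ⟨tx, htx⟩ : ∃ l, kochLabel g x = 0 :: l := ⟨_, label_cons g x⟩
  obtain ⟨ty, hty⟩ : ∃ l, kochLabel g y = 0 :: l := ⟨_, label_cons g y⟩
  rw [htx] at dfx h
  rw [hty] at dfy h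
  have hsx := label_sorted g x
  rw [htx] at hsx
  have hpx := List.isChain_iff_pairwise.mp hsx
  have htx_ge : ∀ k ∈ tx, 1 ≤ k := by
    intro k hk
    have := List.rel_of_pairwise_cons hpx hk
    omega
  have htx_le : ∀ k ∈ tx, k ≤ g := by
    intro k hk
    exact label_le g x k (by rw [htx]; exact List.mem_cons_of_mem _ hk)
  have hne : tx ≠ [] := by
    intro he
    rw [he] at h
    simp at h
  obtain ⟨k0, hk0⟩ := List.exists_mem_of_ne_nil tx hne
  have hg1 : 1 ≤ g := le_trans (htx_ge k0 hk0) (htx_le k0 hk0)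
  have hgeo := K_geom g tx 1 hsx.tail htx_le htx_ge
  have h4 : (4:ℤ)^g = 4*4^(g-1) := by
    conv_lhs => rw [show g = (g-1)+1 by omega]
    rw [pow_succ]; ring
  have hnnY := S_nonneg g ty
  have hlen : (ty.length : ℤ) + 1 ≤ (tx.length : ℤ) := by
    simp only [List.length_cons] at h
    have := Nat.succ_le_of_lt (Nat.lt_of_succ_lt_succ h)
    exact_mod_cast this
  have hp4 : (0:ℤ) ≤ 4^g := by positivity
  have hkey : (4:ℤ)^g*((ty.length:ℤ)+1) ≤ 4^g*(tx.length:ℤ) :=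
    mul_le_mul_of_nonneg_left hlen hp4
  rw [dfx, dfy, tf_sum g, tf_sum g]
  simp only [List.map_cons, List.sum_cons, List.length_cons, Nat.sub_zero, pow_zero]
  push_cast
  nlinarith [hgeo, hnnY, hkey, h4, hp4]

lemma dummy_K_comp_len : True := trivial

lemma K_comp_lex (g : ℕ) (x y : KochV g)
    (hlen : (kochLabel g x).length = (kochLabel g y).length)
    (z : ℕ) (hz : z < (kochLabel g x).length)
    (hpre : ∀ l < z, (kochLabel g x).getD l 0 = (kochLabel g y).getD l 0)
    (hgt : (kochLabel g y).getD z 0 < (kochLabel g x).getD z 0) : Dn g y < Dn g x := by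
  suffices hZ : (Dn g y : ℤ) < (Dn g x : ℤ) by exact_mod_cast hZ
  have dfx := DF g x
  have dfy := DF g y
  set Lx := kochLabel g x with hLx
  set Ly := kochLabel g y with hLy
  have hzy : z < Ly.length := hlen ▸ hz
  set a := Lx[z]'hz with ha
  set b := Ly[z]'hzy with hb
  have hgt' : b < a := by
    rw [List.getD_eq_getElem Lx 0 hz, List.getD_eq_getElem Ly 0 hzy] at hgt
    exact hgt
  have htake : Lx.take z = Ly.take z := by
    apply List.ext_getElem
    · simp only [List.length_take]; omega
    · intro l h1 h2
      have hl : l < z := by simp only [List.length_take] at h1; omega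
      have hlx : l < Lx.length := by omega
      have hly : l < Ly.length := by omega
      simp only [List.getElem_take]
      rw [← List.getD_eq_getElem Lx 0 hlx, ← List.getD_eq_getElem Ly 0 hly]
      exact hpre l hl
  have hsplit : ∀ (L : List ℕ) (f : ℕ → ℤ),
      (L.map f).sum = ((L.take z).map f).sum + ((L.drop z).map f).sum := by
    intro L f
    rw [← List.sum_append, ← List.map_append, List.take_append_drop]
  have hdx : Lx.drop z = a :: Lx.drop (z+1) := List.drop_eq_getElem_cons hz
  have hdy : Ly.drop z = b :: Ly.drop (z+1) := List.drop_eq_getElem_cons hzy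
  have hpRx : List.Pairwise (· < ·) (Lx.drop z) :=
    (List.isChain_iff_pairwise.mp (label_sorted g x)).sublist (List.drop_sublist z Lx)
  have hsRx : List.Chain' (· < ·) (Lx.drop z) := List.isChain_iff_pairwise.mpr hpRx
  have hgeRx : ∀ k ∈ Lx.drop z, a ≤ k := by
    intro k hk
    rw [hdx] at hk hpRx
    rcases List.mem_cons.mp hk with rfl | hk'
    · exact le_refl _
    · exact le_of_lt (List.rel_of_pairwise_cons hpRx hk')
  have hleRx : ∀ k ∈ Lx.drop z, k ≤ g := fun k hk =>
    label_le g x k (List.drop_subset z Lx hk)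
  have ha_le : a ≤ g := hleRx a (by rw [hdx]; exact List.mem_cons_self)
  have hb_le : b ≤ g := label_le g y b (List.getElem_mem hzy)
  have hgeo := K_geom g (Lx.drop z) a hsRx hleRx hgeRx
  have hpow : 4*(4:ℤ)^(g-a) ≤ 4^(g-b) := by
    have h1 : (4:ℤ)^(g-a) ≤ 4^(g-b-1) := pow_le_pow_right₀ (by norm_num) (by omega)
    have h2 : (4:ℤ)^(g-b) = 4*4^(g-b-1) := by
      set m := g - b - 1 with hm
      rw [show g - b = m + 1 by omega, pow_succ]; ring
    linarith
  have hposb : (1:ℤ) ≤ 4^(g-b) := one_le_pow₀ (by norm_num)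
  have hSRy : (4:ℤ)^(g-b) ≤ ((Ly.drop z).map fun k => (4:ℤ)^(g-k)).sum := by
    rw [hdy]
    simp only [List.map_cons, List.sum_cons]
    have := S_nonneg g (Ly.drop (z+1))
    linarith
  have hlenZ : (Lx.length : ℤ) = Ly.length := by exact_mod_cast hlen
  rw [dfx, dfy, tf_sum g, tf_sum g, hsplit Lx, hsplit Ly, htake, hlen]
  linarith [hgeo, hpow, hSRy, hposb]

lemma dummy_K_comp_lex : True := trivial

lemma K_comp_eq (g : ℕ) (x y : KochV g) (h : kochLabel g x = kochLabel g y) :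
    Dn g x = Dn g y := by
  have dfx := DF g x
  have dfy := DF g y
  rw [h] at dfx
  have : (Dn g x : ℤ) = (Dn g y : ℤ) := by rw [dfx, dfy]
  exact_mod_cast this

lemma dummy_K_comp_eq : True := trivial

end Koch

/-- Comparison of the diagonal entries of the pseudoinverse `L†(g)` of the Laplacian
of the Koch network `K_g` for two different nodes `x`, `y` with labels
`{i_0, …, i_{n_i}}` and `{j_0, …, j_{n_j}}` (so the label lists have lengths
`n_i + 1` and `n_j + 1`):
(1) if `n_i > n_j` then `L†_{xx} > L†_{yy}`;
(2) if `n_i < n_j` then `L†_{xx} < L†_{yy}`;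
(3) if `n_i = n_j` and the labels first differ at position `z`, then
    `L†_{xx} > L†_{yy}` when `i_z > j_z` and `L†_{xx} < L†_{yy}` when `i_z < j_z`;
(4) if the labels coincide, then `L†_{xx} = L†_{yy}`. -/
theorem stmt_15 (g : ℕ) (x y : KochV g) (hxy : x ≠ y) :
    ((kochLabel g x).length > (kochLabel g y).length →
      gdag (kochGraph g) x x > gdag (kochGraph g) y y) ∧
    ((kochLabel g x).length < (kochLabel g y).length →
      gdag (kochGraph g) x x < gdag (kochGraph g) y y) ∧
    ((kochLabel g x).length = (kochLabel g y).length →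
      ∀ z < (kochLabel g x).length,
        (∀ l < z, (kochLabel g x).getD l 0 = (kochLabel g y).getD l 0) →
        (kochLabel g x).getD z 0 ≠ (kochLabel g y).getD z 0 →
        (((kochLabel g x).getD z 0 > (kochLabel g y).getD z 0 →
            gdag (kochGraph g) x x > gdag (kochGraph g) y y) ∧
         ((kochLabel g x).getD z 0 < (kochLabel g y).getD z 0 →
            gdag (kochGraph g) x x < gdag (kochGraph g) y y))) ∧
    (kochLabel g x = kochLabel g y →
      gdag (kochGraph g) x x = gdag (kochGraph g) y y) := by
  refine ⟨?_, ?_, ?_, ?_⟩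
  · intro h
    exact K_gdag_lt g y x (K_comp_len g x y h)
  · intro h
    exact K_gdag_lt g x y (K_comp_len g y x h)
  · intro hlen z hz hpre hne
    constructor
    · intro hgt
      exact K_gdag_lt g y x (K_comp_lex g x y hlen z hz hpre hgt)
    · intro hlt
      have hz' : z < (kochLabel g y).length := hlen ▸ hz
      exact K_gdag_lt g x y (K_comp_lex g y x hlen.symm z hz'
        (fun l hl => (hpre l hl).symm) hlt)
  · intro h
    exact K_gdag_eq g x y (K_comp_eq g x y h)
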